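/- For all positive integers n and k with n·k ≥ 2, the dichromatic number of the blow-up of the complete graph K_n with power k satisfies χ⃗(K_n^(k)) > min{ n·k / (4·log₂(n·k)), n/2 }. -/

import Mathlib

/-- An orientation of a simple graph `G`: a relation choosing exactly one
direction for each edge of `G` (and relating no non-adjacent pair). -/
def IsOrientation {V : Type*} (G : SimpleGraph V) (D : V → V → Prop) : Prop :=
  (∀ u v, D u v → G.Adj u v) ∧ ∀ u v, G.Adj u v → (D u v ↔ ¬ D v u)

/-- A set `A` of vertices is acyclic for the digraph `D` if the digraph induced
on `A` contains no directed cycle (no vertex reaches itself by a nonempty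
directed walk inside `A`). -/
def IsAcyclicOn {V : Type*} (D : V → V → Prop) (A : Set V) : Prop :=
  ∀ x ∈ A, ¬ Relation.TransGen (fun a b => a ∈ A ∧ b ∈ A ∧ D a b) x x

/-- A set `A` of vertices contains a directed cycle of the digraph `D`. -/
def HasDirCycleOn {V : Type*} (D : V → V → Prop) (A : Set V) : Prop :=
  ∃ x ∈ A, Relation.TransGen (fun a b => a ∈ A ∧ b ∈ A ∧ D a b) x x

/-- The chromatic number of a digraph `D`: the minimum number of acyclic
vertex-sets whose union is the whole vertex set. -/
noncomputable def digraphChrom {V : Type*} (D : V → V → Prop) : ℕ :=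
  sInf {k : ℕ | ∃ f : V → Fin k, ∀ i : Fin k, IsAcyclicOn D {v | f v = i}}

/-- The dichromatic number of an undirected graph: the maximum chromatic number
over all orientations of its edges. -/
noncomputable def dichromatic {V : Type*} (G : SimpleGraph V) : ℕ :=
  sSup {k : ℕ | ∃ D : V → V → Prop, IsOrientation G D ∧ k = digraphChrom D}

/-- The blow-up of a simple graph `H` with power `m`: each vertex is replaced by
an independent set of size `m`, each edge by a complete bipartite graph `K_{m,m}`. -/
def blowup {α : Type*} (H : SimpleGraph α) (m : ℕ) : SimpleGraph (α × Fin m) where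
  Adj a b := H.Adj a.1 b.1
  symm := ⟨fun _ _ h => H.adj_symm h⟩
  loopless := ⟨fun a h => H.loopless.irrefl a.1 h⟩

namespace DichromAux
open Finset
open scoped Classical

variable {n k : ℕ}

lemma topo_sort {V : Type*} [DecidableEq V] (D : V → V → Prop) (A : Finset V) (hA : IsAcyclicOn D ↑A) :
    ∃ ℓ : ↥A ↪ Fin A.card, ∀ a b : ↥A, D a b → ℓ a < ℓ b := by
  classical
  set r : V → V → Prop := fun a b => a ∈ (↑A : Set V) ∧ b ∈ (↑A : Set V) ∧ D a b with hr
  set t : V → V → Prop := Relation.TransGen r with ht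
  have hirr : ∀ x, ¬ t x x := by
    intro x hx
    have hxA : x ∈ (↑A : Set V) := by
      cases hx with
      | single h => exact h.1
      | tail _ h => exact h.2.1
    exact hA x hxA hx
  set p : V → V → Prop := fun a b => t a b ∨ a = b with hp
  haveI : IsRefl V p := ⟨fun a => Or.inr rfl⟩
  haveI : IsTrans V p := ⟨by
    rintro a b c (hab | rfl) (hbc | rfl)
    · exact Or.inl (hab.trans hbc)
    · exact Or.inl hab
    · exact Or.inl hbc
    · exact Or.inr rfl⟩
  haveI : IsAntisymm V p := ⟨by
    rintro a b (hab | rfl) hba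
    · rcases hba with hba | rfl
      · exact absurd (hab.trans hba) (hirr a)
      · rfl
    · rfl⟩
  haveI : IsPreorder V p := ⟨⟩
  haveI hpo : IsPartialOrder V p := ⟨⟩
  obtain ⟨s, hslin, hps⟩ := extend_partialOrder p
  haveI : IsLinearOrder V s := hslin
  haveI : DecidableRel s := Classical.decRel s
  set l : List V := A.sort s with hl
  have hlen : l.length = A.card := Finset.length_sort s
  have hmem : ∀ a : ↥A, (a : V) ∈ l := fun a => (Finset.mem_sort s).2 a.2
  have hsorted : l.Pairwise s := Finset.pairwise_sort A s
  set idx : ↥A → Fin l.length := fun a => ⟨l.idxOf ↑a, List.idxOf_lt_length_iff.2 (hmem a)⟩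
    with hidx
  have hget : ∀ a : ↥A, l.get (idx a) = ↑a := fun a => List.idxOf_get _
  have hmono : ∀ a b : ↥A, t ↑a ↑b → idx a < idx b := by
    intro a b htab
    have hne : (a : V) ≠ b := by rintro h; exact hirr _ (h ▸ htab)
    have hsab : s ↑a ↑b := hps _ _ (Or.inl htab)
    rcases lt_trichotomy (idx a) (idx b) with h | h | h
    · exact h
    · exact absurd (by rw [← hget a, ← hget b, h]) hne
    · have := hsorted.rel_get_of_lt h
      rw [hget a, hget b] at this
      exact absurd (Std.Antisymm.antisymm _ _ hsab this) hne
  refine ⟨⟨fun a => (idx a).cast hlen, ?_⟩, ?_⟩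
  · intro a b h
    have : idx a = idx b := by
      apply Fin.ext
      simpa [Fin.ext_iff] using h
    have := congrArg l.get this
    rw [hget a, hget b] at this
    exact Subtype.ext this
  · intro a b hD
    have : t ↑a ↑b := Relation.TransGen.single ⟨a.2, b.2, hD⟩
    exact hmono a b this


abbrev VV (n k : ℕ) := Fin n × Fin k

def EE (n k : ℕ) : VV n k ≃ Fin (n * k) :=
  finProdFinEquiv

/-- the digraph determined by a boolean table `g` -/
def Dg (g : VV n k × VV n k → Bool) (u v : VV n k) : Prop :=
  u.1 ≠ v.1 ∧ ((EE n k u < EE n k v ∧ g (u, v) = true) ∨ (EE n k v < EE n k u ∧ g (v, u) = false))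

lemma blowup_adj (u v : VV n k) :
    (blowup (SimpleGraph.completeGraph (Fin n)) k).Adj u v ↔ u.1 ≠ v.1 := Iff.rfl

lemma isOrientation_Dg (g : VV n k × VV n k → Bool) :
    IsOrientation (blowup (SimpleGraph.completeGraph (Fin n)) k) (Dg g) := by
  constructor
  · exact fun u v h => h.1
  · intro u v hadj
    have hne : u ≠ v := fun h => hadj (h ▸ rfl)
    have hEne : EE n k u ≠ EE n k v := fun h => hne ((EE n k).injective h)
    rcases lt_or_gt_of_ne hEne with hlt | hlt
    · constructor
      · rintro ⟨h1, h2⟩ ⟨h1', h2'⟩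
        rcases h2 with ⟨_, hg⟩ | ⟨hc, _⟩
        · rcases h2' with ⟨hc, _⟩ | ⟨_, hg'⟩
          · exact absurd hc (not_lt.2 hlt.le)
          · simp [hg] at hg'
        · exact absurd hc (not_lt.2 hlt.le)
      · intro hnd
        refine ⟨hadj, Or.inl ⟨hlt, ?_⟩⟩
        by_contra hg
        exact hnd ⟨fun h => hadj (h ▸ rfl), Or.inr ⟨hlt, by simpa using hg⟩⟩
    · constructor
      · rintro ⟨h1, h2⟩ ⟨h1', h2'⟩
        rcases h2 with ⟨hc, _⟩ | ⟨_, hg⟩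
        · exact absurd hc (not_lt.2 hlt.le)
        · rcases h2' with ⟨_, hg'⟩ | ⟨hc, _⟩
          · simp [hg] at hg'
          · exact absurd hc (not_lt.2 hlt.le)
      · intro hnd
        refine ⟨hadj, Or.inr ⟨hlt, ?_⟩⟩
        by_contra hg
        exact hnd ⟨fun h => hadj (h ▸ rfl), Or.inl ⟨hlt, by simpa using hg⟩⟩


def PP (A : Finset (VV n k)) : Finset (VV n k × VV n k) :=
  (A ×ˢ A).filter (fun p => p.1.1 ≠ p.2.1 ∧ EE n k p.1 < EE n k p.2)

lemma card_bad_le (A : Finset (VV n k)) :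
    (Finset.univ.filter (fun g : VV n k × VV n k → Bool => IsAcyclicOn (Dg g) ↑A)).card
      ≤ A.card.factorial * 2 ^ ((n * k) * (n * k) - (PP A).card) := by
  classical
  set T : (↥A ↪ Fin A.card) → Finset (VV n k × VV n k → Bool) := fun ℓ =>
    Finset.univ.filter (fun g => ∀ a b : ↥A, (a : VV n k).1 ≠ (b : VV n k).1 →
      EE n k ↑a < EE n k ↑b → g (↑a, ↑b) = decide (ℓ a < ℓ b)) with hT
  have hcover : (Finset.univ.filter
      (fun g : VV n k × VV n k → Bool => IsAcyclicOn (Dg g) ↑A))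
      ⊆ Finset.univ.biUnion T := by
    intro g hg
    have hac : IsAcyclicOn (Dg g) ↑A := (Finset.mem_filter.1 hg).2
    obtain ⟨ℓ, hℓ⟩ := topo_sort (Dg g) A hac
    refine Finset.mem_biUnion.2 ⟨ℓ, Finset.mem_univ _, Finset.mem_filter.2 ⟨Finset.mem_univ _, ?_⟩⟩
    intro a b hne hE
    cases hg' : g (↑a, ↑b) with
    | true =>
      have hd : Dg g ↑a ↑b := ⟨hne, Or.inl ⟨hE, hg'⟩⟩
      simp [hℓ a b hd]
    | false =>
      have hd : Dg g ↑b ↑a := ⟨Ne.symm hne, Or.inr ⟨hE, hg'⟩⟩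
      have h2 := hℓ b a hd
      simp [Fin.lt_asymm h2]
  have hTcard : ∀ ℓ, (T ℓ).card ≤ 2 ^ ((n * k) * (n * k) - (PP A).card) := by
    intro ℓ
    have hmaps : ∀ g ∈ T ℓ,
        (fun q : ↥((Finset.univ : Finset (VV n k × VV n k)) \ PP A) => g ↑q)
          ∈ (Finset.univ : Finset (↥((Finset.univ : Finset (VV n k × VV n k)) \ PP A) → Bool)) :=
      fun _ _ => Finset.mem_univ _
    have hinj : Set.InjOn
        (fun (g : VV n k × VV n k → Bool)
          (q : ↥((Finset.univ : Finset (VV n k × VV n k)) \ PP A)) => g ↑q) ↑(T ℓ) := by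
      intro g hg g' hg' heq
      have hgT := (Finset.mem_filter.1 hg).2
      have hgT' := (Finset.mem_filter.1 hg').2
      funext p
      by_cases hp : p ∈ PP A
      · have hm := Finset.mem_filter.1 hp
        have hp1 : p.1 ∈ A := (Finset.mem_product.1 hm.1).1
        have hp2 : p.2 ∈ A := (Finset.mem_product.1 hm.1).2
        obtain ⟨hne, hE⟩ := hm.2
        have e1 := hgT ⟨p.1, hp1⟩ ⟨p.2, hp2⟩ hne hE
        have e2 := hgT' ⟨p.1, hp1⟩ ⟨p.2, hp2⟩ hne hE
        calc g p = g (p.1, p.2) := by rw [Prod.mk.eta]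
          _ = g' (p.1, p.2) := by rw [e1, e2]
          _ = g' p := by rw [Prod.mk.eta]
      · have hmem : p ∈ (Finset.univ : Finset (VV n k × VV n k)) \ PP A := by
          simp [hp]
        exact congrFun heq ⟨p, hmem⟩
    calc (T ℓ).card
        ≤ (Finset.univ : Finset (↥((Finset.univ : Finset (VV n k × VV n k)) \ PP A) → Bool)).card :=
          Finset.card_le_card_of_injOn _ hmaps hinj
      _ = 2 ^ ((Finset.univ : Finset (VV n k × VV n k)) \ PP A).card := by
          rw [Finset.card_univ, Fintype.card_fun, Fintype.card_coe, Fintype.card_bool]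
      _ = 2 ^ ((n * k) * (n * k) - (PP A).card) := by
          rw [Finset.card_sdiff_of_subset (Finset.subset_univ _), Finset.card_univ]
          congr 1
          simp [Fintype.card_prod, mul_comm]
  calc (Finset.univ.filter
      (fun g : VV n k × VV n k → Bool => IsAcyclicOn (Dg g) ↑A)).card
      ≤ (Finset.univ.biUnion T).card := Finset.card_le_card hcover
    _ ≤ ∑ ℓ : ↥A ↪ Fin A.card, (T ℓ).card := Finset.card_biUnion_le
    _ ≤ ∑ _ℓ : ↥A ↪ Fin A.card, 2 ^ ((n * k) * (n * k) - (PP A).card) :=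
        Finset.sum_le_sum fun ℓ _ => hTcard ℓ
    _ = A.card.factorial * 2 ^ ((n * k) * (n * k) - (PP A).card) := by
        rw [Finset.sum_const, Finset.card_univ, Fintype.card_embedding_eq, Fintype.card_coe,
          Fintype.card_fin, Nat.descFactorial_self, smul_eq_mul]

lemma PP_card (A : Finset (VV n k)) :
    A.card * A.card ≤ 2 * (PP A).card + A.card * k := by
  classical
  set Padj := (A ×ˢ A).filter (fun p => p.1.1 ≠ p.2.1) with hPadj
  set Peq := (A ×ˢ A).filter (fun p => ¬ p.1.1 ≠ p.2.1) with hPeq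
  have hsplit : Padj.card + Peq.card = A.card * A.card := by
    rw [hPadj, hPeq, Finset.card_filter_add_card_filter_not, Finset.card_product]
  have hPeq : Peq.card ≤ A.card * k := by
    have : Peq.card ≤ (A ×ˢ (Finset.univ : Finset (Fin k))).card := by
      apply Finset.card_le_card_of_injOn (fun p => (p.1, p.2.2))
      · intro p hp
        have := Finset.mem_filter.1 hp
        exact Finset.mem_product.2 ⟨(Finset.mem_product.1 this.1).1, Finset.mem_univ _⟩
      · intro p hp q hq hpq
        have hp' := Finset.mem_filter.1 hp
        have hq' := Finset.mem_filter.1 hq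
        simp only [Prod.mk.injEq] at hpq
        have h1 : p.1 = q.1 := hpq.1
        have h2 : p.2.2 = q.2.2 := hpq.2
        have hp2 : p.2.1 = p.1.1 := (not_ne_iff.1 hp'.2).symm
        have hq2 : q.2.1 = q.1.1 := (not_ne_iff.1 hq'.2).symm
        have : p.2 = q.2 := Prod.ext (by rw [hp2, hq2, h1]) h2
        exact Prod.ext h1 this
    simpa [Finset.card_product] using this
  have hPadj2 : Padj.card = 2 * (PP A).card := by
    have h1 : Padj.filter (fun p => EE n k p.1 < EE n k p.2) = PP A := by
      rw [hPadj, Finset.filter_filter]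
      rfl
    have h2 : (Padj.filter (fun p => ¬ EE n k p.1 < EE n k p.2)).card = (PP A).card := by
      apply Finset.card_bij' (fun p _ => Prod.swap p) (fun p _ => Prod.swap p)
      · intro p hp
        have hm := Finset.mem_filter.1 hp
        have hm2 := Finset.mem_filter.1 hm.1
        have hne := hm2.2
        have hprod := Finset.mem_product.1 hm2.1
        have hne' : EE n k p.1 ≠ EE n k p.2 := by
          intro h
          exact hne (congrArg Prod.fst ((EE n k).injective h))
        have hlt : EE n k p.2 < EE n k p.1 := (hne'.lt_or_gt).resolve_left hm.2
        exact Finset.mem_filter.2 ⟨Finset.mem_product.2 ⟨hprod.2, hprod.1⟩, Ne.symm hne, hlt⟩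
      · intro p hp
        have hm := Finset.mem_filter.1 hp
        have hprod := Finset.mem_product.1 hm.1
        refine Finset.mem_filter.2 ⟨Finset.mem_filter.2
          ⟨Finset.mem_product.2 ⟨hprod.2, hprod.1⟩, Ne.symm hm.2.1⟩, ?_⟩
        exact not_lt.2 hm.2.2.le
      · intro p _; exact Prod.swap_swap p
      · intro p _; exact Prod.swap_swap p
    have := Finset.card_filter_add_card_filter_not
      (s := Padj) (fun p => EE n k p.1 < EE n k p.2)
    rw [h1, h2] at this
    omega
  omega

lemma desc_lt_pow {N m : ℕ} (hN : 2 ≤ N) (hm : 2 ≤ m) : N.descFactorial m < N ^ m := by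
  obtain ⟨j, rfl⟩ : ∃ j, m = j + 1 := ⟨m - 1, by omega⟩
  have hj : 1 ≤ j := by omega
  rw [Nat.descFactorial_succ, pow_succ]
  calc (N - j) * N.descFactorial j ≤ (N - 1) * N ^ j :=
        Nat.mul_le_mul (by omega) (Nat.descFactorial_le_pow N j)
    _ < N * N ^ j := by
        have : 0 < N ^ j := Nat.pow_pos (by omega)
        exact Nat.mul_lt_mul_of_lt_of_le (by omega) le_rfl this
    _ = N ^ j * N := mul_comm _ _

lemma exists_good (m : ℕ) (hk : 0 < k) (hN : 2 ≤ n * k) (hm2k : 2 * k ≤ m)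
    (hm4 : 4 * Real.logb 2 (n * k) ≤ (m : ℝ)) :
    ∃ g : VV n k × VV n k → Bool,
      ∀ A : Finset (VV n k), A.card = m → ¬ IsAcyclicOn (Dg g) ↑A := by
  classical
  set N := n * k with hNdef
  have hm2 : 2 ≤ m := by omega
  have hNR : (2:ℝ) ≤ (N : ℝ) := by exact_mod_cast hN
  have hNpos : (0:ℝ) < N := by linarith
  set bad := Finset.univ.filter
    (fun g : VV n k × VV n k → Bool => ∃ A : Finset (VV n k), A.card = m ∧ IsAcyclicOn (Dg g) ↑A)
    with hbad
  -- key real bound per A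
  have hkey : ∀ A : Finset (VV n k), A.card = m →
      ((2:ℝ) ^ (N * N - (PP A).card)) ≤ 2 ^ (N * N) / (N : ℝ) ^ m := by
    intro A hAm
    have hPsub : (PP A).card ≤ N * N := by
      calc (PP A).card ≤ (Finset.univ : Finset (VV n k × VV n k)).card :=
            Finset.card_le_card (Finset.subset_univ _)
        _ = N * N := by simp [Finset.card_univ, hNdef]
    have hlogpos : (0:ℝ) ≤ Real.logb 2 N := Real.logb_nonneg one_lt_two (by linarith)
    -- m * logb 2 N ≤ Pc
    have hPc : (m : ℝ) * Real.logb 2 N ≤ ((PP A).card : ℝ) := by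
      have h1 : (m : ℝ) * m ≤ 2 * ((PP A).card : ℝ) + m * k := by
        have := PP_card A
        rw [hAm] at this
        exact_mod_cast this
      have hm4' : 4 * Real.logb 2 (N : ℝ) ≤ (m : ℝ) := by
        rw [hNdef]; push_cast; exact hm4
      have h2 : 2 * Real.logb 2 N ≤ (m : ℝ) - k := by
        have hk' : (k : ℝ) ≤ m / 2 := by
          have : (2 * k : ℕ) ≤ m := hm2k
          have : (2:ℝ) * k ≤ m := by exact_mod_cast this
          linarith
        linarith
      have h3 : (m:ℝ) * (2 * Real.logb 2 N) ≤ (m:ℝ) * ((m:ℝ) - k) :=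
        mul_le_mul_of_nonneg_left h2 (by positivity)
      nlinarith [h3, h1]
    -- N^m ≤ 2^Pc in ℝ
    have hNm : (N : ℝ) ^ m ≤ (2:ℝ) ^ (PP A).card := by
      have e1 : (N : ℝ) ^ m = (2:ℝ) ^ ((m : ℝ) * Real.logb 2 N) := by
        rw [mul_comm, Real.rpow_mul (by norm_num), Real.rpow_logb two_pos (by norm_num) hNpos,
          Real.rpow_natCast]
      have e2 : ((2:ℝ) ^ (PP A).card : ℝ) = (2:ℝ) ^ (((PP A).card : ℕ) : ℝ) :=
        (Real.rpow_natCast 2 _).symm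
      rw [e1, e2]
      exact Real.rpow_le_rpow_of_exponent_le one_le_two hPc
    rw [le_div_iff₀ (by positivity)]
    calc (2:ℝ) ^ (N * N - (PP A).card) * (N:ℝ) ^ m
        ≤ (2:ℝ) ^ (N * N - (PP A).card) * 2 ^ (PP A).card := by
          exact mul_le_mul_of_nonneg_left hNm (by positivity)
      _ = 2 ^ (N * N) := by
          rw [← pow_add]
          congr 1
          omega
  -- union bound
  have hcard : (bad.card : ℝ) < (2 : ℝ) ^ (N * N) := by
    have hsub : bad ⊆ (Finset.powersetCard m Finset.univ).biUnion
        (fun A : Finset (VV n k) => Finset.univ.filter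
          (fun g : VV n k × VV n k → Bool => IsAcyclicOn (Dg g) ↑A)) := by
      intro g hg
      obtain ⟨A, hAm, hAac⟩ := (Finset.mem_filter.1 hg).2
      exact Finset.mem_biUnion.2 ⟨A, Finset.mem_powersetCard.2 ⟨Finset.subset_univ _, hAm⟩,
        Finset.mem_filter.2 ⟨Finset.mem_univ _, hAac⟩⟩
    have h1 : (bad.card : ℝ) ≤ ∑ A ∈ Finset.powersetCard m (Finset.univ : Finset (VV n k)),
        ((Finset.univ.filter
          (fun g : VV n k × VV n k → Bool => IsAcyclicOn (Dg g) ↑A)).card : ℝ) := by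
      have := (Finset.card_le_card hsub).trans Finset.card_biUnion_le
      exact_mod_cast this
    have h2 : ∀ A ∈ Finset.powersetCard m (Finset.univ : Finset (VV n k)),
        ((Finset.univ.filter
          (fun g : VV n k × VV n k → Bool => IsAcyclicOn (Dg g) ↑A)).card : ℝ)
          ≤ (m.factorial : ℝ) * (2 ^ (N * N) / (N : ℝ) ^ m) := by
      intro A hA
      have hAm : A.card = m := (Finset.mem_powersetCard.1 hA).2
      have hb := card_bad_le A
      rw [hAm] at hb
      calc ((Finset.univ.filter
          (fun g : VV n k × VV n k → Bool => IsAcyclicOn (Dg g) ↑A)).card : ℝ)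
          ≤ (m.factorial : ℝ) * (2:ℝ) ^ (N * N - (PP A).card) := by exact_mod_cast hb
        _ ≤ (m.factorial : ℝ) * (2 ^ (N * N) / (N : ℝ) ^ m) :=
            mul_le_mul_of_nonneg_left (hkey A hAm) (by positivity)
    calc (bad.card : ℝ)
        ≤ ∑ A ∈ Finset.powersetCard m (Finset.univ : Finset (VV n k)),
            ((Finset.univ.filter
              (fun g : VV n k × VV n k → Bool => IsAcyclicOn (Dg g) ↑A)).card : ℝ) := h1
      _ ≤ ∑ _A ∈ Finset.powersetCard m (Finset.univ : Finset (VV n k)),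
            ((m.factorial : ℝ) * (2 ^ (N * N) / (N : ℝ) ^ m)) := Finset.sum_le_sum h2
      _ = (N.choose m : ℝ) * ((m.factorial : ℝ) * (2 ^ (N * N) / (N : ℝ) ^ m)) := by
          rw [Finset.sum_const, Finset.card_powersetCard, Finset.card_univ]
          simp [hNdef, nsmul_eq_mul]
      _ = (N.descFactorial m : ℝ) * (2 ^ (N * N) / (N : ℝ) ^ m) := by
          rw [Nat.descFactorial_eq_factorial_mul_choose]
          push_cast
          ring
      _ < (2:ℝ) ^ (N * N) := by
          rw [div_eq_mul_inv, ← mul_assoc, mul_comm, ← mul_assoc]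
          have hdesc : ((N.descFactorial m : ℝ)) < (N:ℝ) ^ m := by
            exact_mod_cast desc_lt_pow hN hm2
          have : ((N:ℝ) ^ m)⁻¹ * (N.descFactorial m : ℝ) < 1 := by
            rw [inv_mul_lt_iff₀ (by positivity), mul_one]
            exact hdesc
          calc ((N:ℝ) ^ m)⁻¹ * (N.descFactorial m : ℝ) * 2 ^ (N * N)
                < 1 * 2 ^ (N * N) := by
                  exact mul_lt_mul_of_pos_right this (by positivity)
            _ = 2 ^ (N * N) := one_mul _
  -- conclude
  have hex : ∃ g, g ∉ bad := by
    by_contra hcon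
    push_neg at hcon
    have heq : bad = Finset.univ := Finset.eq_univ_iff_forall.2 hcon
    have hcu : (Finset.univ : Finset (VV n k × VV n k → Bool)).card = 2 ^ (N * N) := by
      rw [Finset.card_univ, Fintype.card_fun, Fintype.card_bool]
      congr 1
      simp [hNdef]
    rw [heq, hcu] at hcard
    have : ((2:ℝ) ^ (N * N) : ℝ) < 2 ^ (N * N) := by exact_mod_cast hcard
    exact lt_irrefl _ this
  obtain ⟨g, hg⟩ := hex
  refine ⟨g, fun A hAm hAac => hg (Finset.mem_filter.2 ⟨Finset.mem_univ _, ⟨A, hAm, hAac⟩⟩)⟩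

lemma isAcyclicOn_mono {V : Type*} {D : V → V → Prop} {S T : Set V}
    (hS : IsAcyclicOn D S) (hsub : T ⊆ S) : IsAcyclicOn D T := by
  intro x hx hcyc
  exact hS x (hsub hx)
    (Relation.TransGen.mono (by intro a b h; exact ⟨hsub h.1, hsub h.2.1, h.2.2⟩) x x hcyc)

lemma isAcyclicOn_subsingleton {V : Type*} {D : V → V → Prop} (hirr : ∀ v, ¬ D v v)
    {S : Set V} (hS : S.Subsingleton) : IsAcyclicOn D S := by
  intro x hx hcyc
  have hemp : ∀ a b : V, ¬ (a ∈ S ∧ b ∈ S ∧ D a b) := by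
    rintro a b ⟨ha, hb, hD⟩
    exact hirr a (hS ha hb ▸ hD)
  cases hcyc with
  | single h => exact hemp _ _ h
  | tail _ h => exact hemp _ _ h

lemma chromSet_nonempty {V : Type*} [Fintype V] {D : V → V → Prop} (hirr : ∀ v, ¬ D v v) :
    Fintype.card V ∈ {c : ℕ | ∃ f : V → Fin c, ∀ i : Fin c, IsAcyclicOn D {v | f v = i}} := by
  refine ⟨Fintype.equivFin V, fun i => isAcyclicOn_subsingleton hirr ?_⟩
  intro a ha b hb
  exact (Fintype.equivFin V).injective (ha.trans hb.symm)

lemma digraphChrom_le_card {V : Type*} [Fintype V] {D : V → V → Prop} (hirr : ∀ v, ¬ D v v) :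
    digraphChrom D ≤ Fintype.card V :=
  Nat.sInf_le (chromSet_nonempty hirr)

/-- if every acyclic set has at most `t` elements then `card V ≤ t * chrom` -/
lemma card_le_mul_digraphChrom {V : Type*} [Fintype V] [DecidableEq V]
    {D : V → V → Prop} (hirr : ∀ v, ¬ D v v) {t : ℕ}
    (hbd : ∀ A : Finset V, IsAcyclicOn D ↑A → A.card ≤ t) :
    Fintype.card V ≤ digraphChrom D * t := by
  classical
  have hmem : digraphChrom D ∈
      {c : ℕ | ∃ f : V → Fin c, ∀ i : Fin c, IsAcyclicOn D {v | f v = i}} :=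
    Nat.sInf_mem ⟨_, chromSet_nonempty hirr⟩
  obtain ⟨f, hf⟩ := hmem
  have hcard : (Finset.univ : Finset V).card =
      ∑ i : Fin (digraphChrom D), (Finset.univ.filter (fun v => f v = i)).card :=
    Finset.card_eq_sum_card_fiberwise (fun x _ => Finset.mem_univ (f x))
  have hfib : ∀ i : Fin (digraphChrom D),
      (Finset.univ.filter (fun v => f v = i)).card ≤ t := by
    intro i
    apply hbd
    have : ↑(Finset.univ.filter (fun v => f v = i)) = {v | f v = i} := by
      ext v; simp
    rw [this]
    exact hf i
  calc Fintype.card V = _ := (Finset.card_univ (α := V)).symm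
    _ = ∑ i : Fin (digraphChrom D), (Finset.univ.filter (fun v => f v = i)).card := hcard
    _ ≤ ∑ _i : Fin (digraphChrom D), t := Finset.sum_le_sum (fun i _ => hfib i)
    _ = digraphChrom D * t := by simp [Finset.sum_const, Finset.card_univ, mul_comm]

lemma digraphChrom_le_dichromatic {V : Type*} [Fintype V] {G : SimpleGraph V}
    {D : V → V → Prop} (hor : IsOrientation G D) :
    digraphChrom D ≤ dichromatic G := by
  apply le_csSup
  · refine ⟨Fintype.card V, ?_⟩
    rintro c ⟨D', hor', rfl⟩
    exact digraphChrom_le_card (fun v hv => G.loopless.irrefl v (hor'.1 v v hv))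
  · exact ⟨D, hor, rfl⟩


end DichromAux

/-- **Theorem 3.4.** `χ⃗(K_n^(k)) > min{ nk / (4 log₂(nk)), n/2 }`. -/
theorem dichromatic_blowup_completeGraph (n k : ℕ) (hn : 0 < n) (hk : 0 < k)
    (hnk : 2 ≤ n * k) :
    min (((n * k : ℕ) : ℝ) / (4 * Real.logb 2 ((n * k : ℕ) : ℝ))) ((n : ℝ) / 2)
      < (dichromatic (blowup (SimpleGraph.completeGraph (Fin n)) k) : ℝ) := by
  classical
  have hN2R : (2:ℝ) ≤ ((n * k : ℕ) : ℝ) := by exact_mod_cast hnk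
  set x : ℝ := 4 * Real.logb 2 ((n * k : ℕ) : ℝ) with hx
  have hxnn : 0 ≤ x := by
    have : (0:ℝ) ≤ Real.logb 2 ((n * k : ℕ) : ℝ) := Real.logb_nonneg one_lt_two (by linarith)
    rw [hx]; linarith
  set m : ℕ := max (⌈x⌉₊) (2 * k) with hm
  have hm2k : 2 * k ≤ m := le_max_right _ _
  have hm2 : 2 ≤ m := by omega
  have hm4 : 4 * Real.logb 2 ((n : ℝ) * (k : ℝ)) ≤ (m : ℝ) := by
    have h1 : (⌈x⌉₊ : ℝ) ≤ (m : ℝ) := by exact_mod_cast Nat.cast_le.2 (le_max_left _ _)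
    have h2 : x ≤ (⌈x⌉₊ : ℝ) := Nat.le_ceil x
    have : ((n * k : ℕ) : ℝ) = (n : ℝ) * k := by push_cast; ring
    rw [← this]
    linarith
  obtain ⟨g, hg⟩ := DichromAux.exists_good m hk hnk hm2k hm4
  have hor := DichromAux.isOrientation_Dg (n := n) (k := k) g
  have hirr : ∀ v, ¬ DichromAux.Dg g v v := fun v hv => hv.1 rfl
  have hbd : ∀ A : Finset (DichromAux.VV n k), IsAcyclicOn (DichromAux.Dg g) ↑A →
      A.card ≤ m - 1 := by
    intro A hA
    by_contra hc
    push_neg at hc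
    have hmA : m ≤ A.card := by omega
    obtain ⟨B, hBsub, hBcard⟩ := Finset.exists_subset_card_eq hmA
    exact hg B hBcard (DichromAux.isAcyclicOn_mono hA (Finset.coe_subset.2 hBsub))
  have hchain : n * k ≤ digraphChrom (DichromAux.Dg g) * (m - 1) := by
    have := DichromAux.card_le_mul_digraphChrom hirr hbd
    simpa using this
  set c := digraphChrom (DichromAux.Dg g) with hc
  have hcle : c ≤ dichromatic (blowup (SimpleGraph.completeGraph (Fin n)) k) :=
    DichromAux.digraphChrom_le_dichromatic hor
  set d := dichromatic (blowup (SimpleGraph.completeGraph (Fin n)) k) with hd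
  have hc1 : 1 ≤ c := by
    rcases Nat.eq_zero_or_pos c with h | h
    · rw [h] at hchain; simp at hchain; omega
    · exact h
  have hdN : n * k ≤ d * (m - 1) :=
    le_trans hchain (Nat.mul_le_mul_right _ hcle)
  have hd1 : 1 ≤ d := le_trans hc1 hcle
  have hdR : (1:ℝ) ≤ (d:ℝ) := by exact_mod_cast hd1
  set Mr : ℝ := max x (2 * (k:ℝ)) with hMr
  have hkR : (1:ℝ) ≤ (k:ℝ) := by exact_mod_cast hk
  have hMrpos : 0 < Mr := lt_of_lt_of_le (by linarith) (le_max_right _ _)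
  have hmlt : (m:ℝ) - 1 < Mr := by
    have h1 : (m : ℝ) = max ((⌈x⌉₊ : ℕ) : ℝ) ((2 * k : ℕ) : ℝ) := by
      rw [hm, Nat.cast_max]
    have h2 : ((⌈x⌉₊ : ℕ) : ℝ) < Mr + 1 := by
      have := Nat.ceil_lt_add_one hxnn
      have hxM : x ≤ Mr := le_max_left _ _
      linarith
    have h3 : ((2 * k : ℕ) : ℝ) < Mr + 1 := by
      have : (2:ℝ) * k ≤ Mr := le_max_right _ _
      push_cast
      linarith
    rw [h1]
    rcases max_cases (((⌈x⌉₊ : ℕ) : ℝ)) (((2 * k : ℕ) : ℝ)) with ⟨he, _⟩ | ⟨he, _⟩ <;>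
      rw [he] <;> linarith
  have hNd : ((n * k : ℕ) : ℝ) < (d:ℝ) * Mr := by
    have h1 : ((n * k : ℕ) : ℝ) ≤ (d:ℝ) * ((m:ℝ) - 1) := by
      have hcast : ((m - 1 : ℕ) : ℝ) = (m:ℝ) - 1 := by
        rw [Nat.cast_sub (by omega)]; norm_num
      calc ((n * k : ℕ) : ℝ) ≤ ((d * (m - 1) : ℕ) : ℝ) := Nat.cast_le.2 hdN
        _ = (d:ℝ) * ((m:ℝ) - 1) := by rw [Nat.cast_mul, hcast]
    have h2 : (d:ℝ) * ((m:ℝ) - 1) < (d:ℝ) * Mr :=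
      mul_lt_mul_of_pos_left hmlt (by linarith)
    linarith
  have hfin : ((n * k : ℕ) : ℝ) / Mr < (d:ℝ) := (div_lt_iff₀ hMrpos).2 (by linarith)
  have hminle : min (((n * k : ℕ) : ℝ) / x) ((n : ℝ) / 2) ≤ ((n * k : ℕ) : ℝ) / Mr := by
    rcases le_total x (2 * (k:ℝ)) with h | h
    · have hM : Mr = 2 * (k:ℝ) := max_eq_right h
      have hnk2 : ((n * k : ℕ) : ℝ) / (2 * (k:ℝ)) = (n : ℝ) / 2 := by
        push_cast
        field_simp
      rw [hM, hnk2]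
      exact min_le_right _ _
    · have hM : Mr = x := max_eq_left h
      rw [hM]
      exact min_le_left _ _
  calc min (((n * k : ℕ) : ℝ) / x) ((n : ℝ) / 2)
      ≤ ((n * k : ℕ) : ℝ) / Mr := hminle
    _ < (d:ℝ) := hfin
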